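/- Let W be a word over the alphabet {a, ā, b, b̄} in which letters from {a,ā} occupy exactly the odd positions and letters from {b,b̄} occupy exactly the even positions, and suppose W is a balanced parenthesis word when a,b are read as opening and ā,b̄ as closing parentheses. Then for every k, if the k-th occurrence of ā exists, the number of a's to its left is strictly greater than the number of b̄'s to the left of the k-th occurrence of b. -/

import Mathlib

/-- The alphabet `{a, ā, b, b̄}`. -/
inductive Letter : Type
  | a | abar | b | bbar
  deriving DecidableEq

/-- Opening letters are `a` and `b`. -/
def Letter.isOpen : Letter → Bool
  | .a => true
  | .b => true
  | _ => false

/-- The prefix of a word consisting of the letters strictly before the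
`k`-th occurrence of `y` (1-indexed). -/
def takeUntilNth {α : Type*} [DecidableEq α] (y : α) : ℕ → List α → List α
  | _, [] => []
  | k, z :: t =>
    if z = y then (if k ≤ 1 then [] else z :: takeUntilNth y (k-1) t)
    else z :: takeUntilNth y k t

theorem takeUntilNth_spec {α : Type*} [DecidableEq α] (y : α) :
    ∀ (W : List α) (k : ℕ), 1 ≤ k → k ≤ W.count y →
    ∃ t, t < W.length ∧ takeUntilNth y k W = W.take t ∧
      W.getD t y = y ∧ (W.take t).count y = k - 1 := by
  intro W
  induction W with
  | nil => intro k h1 h2; simp at h2; omega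
  | cons z t ih =>
    intro k h1 h2
    by_cases hz : z = y
    · subst hz
      by_cases hk1 : k ≤ 1
      · refine ⟨0, by simp, ?_, by simp, by simp; omega⟩
        simp [takeUntilNth, hk1]
      · have hc : k - 1 ≤ t.count z := by
          rw [List.count_cons_self] at h2; omega
        obtain ⟨t0, ht0, heq, hget, hcount⟩ := ih (k-1) (by omega) hc
        refine ⟨t0 + 1, by simpa using ht0, ?_, by simpa using hget, ?_⟩
        · simp [takeUntilNth, hk1, heq]
        · simp [List.take_succ_cons, List.count_cons_self, hcount]; omega
    · have hc : k ≤ t.count y := by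
        rwa [List.count_cons_of_ne hz] at h2
      obtain ⟨t0, ht0, heq, hget, hcount⟩ := ih k h1 hc
      refine ⟨t0 + 1, by simpa using ht0, ?_, by simpa using hget, ?_⟩
      · simp [takeUntilNth, hz, heq]
      · simp [List.take_succ_cons, List.count_cons_of_ne hz, hcount]

theorem countP_open (l : List Letter) :
    l.countP (fun x => x.isOpen) = l.count .a + l.count .b := by
  induction l with
  | nil => simp
  | cons z t ih =>
    rw [List.countP_cons, List.count_cons, List.count_cons, ih]
    cases z <;> simp [Letter.isOpen] <;> omega

theorem countP_closed (l : List Letter) :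
    l.countP (fun x => ! x.isOpen) = l.count .abar + l.count .bbar := by
  induction l with
  | nil => simp
  | cons z t ih =>
    rw [List.countP_cons, List.count_cons, List.count_cons, ih]
    cases z <;> simp [Letter.isOpen] <;> omega

theorem parity_counts (W : List Letter)
    (halt : ∀ p : ℕ, p < W.length →
      ((p % 2 = 0 → W.getD p .a = .a ∨ W.getD p .a = .abar) ∧
       (p % 2 = 1 → W.getD p .a = .b ∨ W.getD p .a = .bbar))) :
    ∀ t, t ≤ W.length →
      ((W.take t).count .a + (W.take t).count .abar) = (t+1)/2 ∧
      ((W.take t).count .b + (W.take t).count .bbar) = t/2 := by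
  intro t
  induction t with
  | zero => simp
  | succ n ih =>
    intro hlt
    have hn := ih (by omega)
    have hlen : n < W.length := by omega
    have htake : W.take (n+1) = W.take n ++ [W.getD n .a] := by
      rw [List.take_succ, List.getElem?_eq_getElem hlen, List.getD_eq_getElem W .a hlen]
      rfl
    rcases Nat.mod_two_eq_zero_or_one n with h2 | h2
    · rcases (halt n hlen).1 h2 with hl | hl <;>
        · rw [htake, hl] at *
          simp [List.count_append, List.count_cons] at *
          omega
    · rcases (halt n hlen).2 h2 with hl | hl <;>
        · rw [htake, hl] at *
          simp [List.count_append, List.count_cons] at *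
          omega

theorem count_take_mono (W : List Letter) (x : Letter) {s t : ℕ} (h : s ≤ t) :
    (W.take s).count x ≤ (W.take t).count x := by
  have : W.take s = (W.take t).take s := by
    rw [List.take_take, Nat.min_eq_left h]
  rw [this]
  exact ((W.take t).take_sublist s).count_le x

theorem alternating_dyck_strict (W : List Letter)
    (halt : ∀ p : ℕ, p < W.length →
      ((p % 2 = 0 → W.getD p .a = .a ∨ W.getD p .a = .abar) ∧
       (p % 2 = 1 → W.getD p .a = .b ∨ W.getD p .a = .bbar)))
    (hbal : W.countP (fun l => l.isOpen) = W.countP (fun l => ! l.isOpen))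
    (hpre : ∀ t : ℕ, (W.take t).countP (fun l => ! l.isOpen) ≤
      (W.take t).countP (fun l => l.isOpen))
    (k : ℕ) (hk1 : 1 ≤ k) (hk : k ≤ W.count Letter.abar) :
    (takeUntilNth Letter.b k W).count Letter.bbar <
      (takeUntilNth Letter.abar k W).count Letter.a := by
  obtain ⟨p, hp, hPeq, hpget, hpcount⟩ := takeUntilNth_spec .abar W k hk1 hk
  have hpget' : W.getD p .a = .abar := by
    rw [List.getD_eq_getElem W _ hp] at hpget ⊢; exact hpget
  have hpar := parity_counts W halt
  obtain ⟨hPa1, hPa2⟩ := hpar p (le_of_lt hp)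
  have htake : W.take (p+1) = W.take p ++ [Letter.abar] := by
    rw [List.take_succ, List.getElem?_eq_getElem hp]
    rw [List.getD_eq_getElem W .a hp] at hpget'
    rw [hpget']; rfl
  -- parity of p
  have hp2 : p % 2 = 0 := by
    rcases Nat.mod_two_eq_zero_or_one p with h | h
    · exact h
    · rcases (halt p hp).2 h with hl | hl <;> rw [hpget'] at hl <;> exact absurd hl (by simp)
  -- Dyck inequality at p+1
  have hd := hpre (p+1)
  rw [countP_open, countP_closed, htake] at hd
  simp [List.count_append, List.count_cons] at hd
  rw [hpcount] at hd
  -- at least k b's before position p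
  have hBk : k ≤ (W.take p).count .b := by omega
  have hkb : k ≤ W.count .b := le_trans hBk ((W.take_sublist p).count_le .b)
  obtain ⟨q, hq, hQeq, hqget, hqcount⟩ := takeUntilNth_spec .b W k hk1 hkb
  have hqp : q ≤ p := by
    by_contra hc
    have := count_take_mono W .b (le_of_lt (not_le.mp hc))
    omega
  have hmono := count_take_mono W .bbar hqp
  rw [hPeq, hQeq]
  omega
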